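/- If Π = V₁...Vₙ with n ≥ 5 is a convex nondegenerate Simson polygon (admits a point S whose projections onto all side lines are collinear), then no two side lines of Π are parallel. -/

import Mathlib

open EuclideanGeometry RealInnerProductSpace

/- ## Auxiliary vector lemmas in the Euclidean plane -/

noncomputable def simsonCr (v w : EuclideanSpace ℝ (Fin 2)) : ℝ := v 0 * w 1 - v 1 * w 0

namespace SimsonAux

abbrev E2 := EuclideanSpace ℝ (Fin 2)

noncomputable abbrev cr (v w : E2) : ℝ := simsonCr v w

lemma E2_ext {v w : E2} (h0 : v 0 = w 0) (h1 : v 1 = w 1) : v = w := by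
  ext i; fin_cases i <;> assumption

lemma E2_zero {v : E2} (h0 : v 0 = 0) (h1 : v 1 = 0) : v = 0 := by
  apply E2_ext <;> simpa

lemma sub_ap (v w : E2) (i : Fin 2) : (v - w) i = v i - w i := rfl
lemma add_ap (v w : E2) (i : Fin 2) : (v + w) i = v i + w i := rfl
lemma smul_ap (r : ℝ) (v : E2) (i : Fin 2) : (r • v) i = r * v i := rfl
lemma zero_ap (i : Fin 2) : (0 : E2) i = 0 := rfl

lemma cr_swap (v w : E2) : cr v w = - cr w v := by unfold cr simsonCr; ring
lemma cr_sub_left (u v w : E2) : cr (u - v) w = cr u w - cr v w := by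
  unfold cr simsonCr; simp only [sub_ap]; ring
lemma cr_add_left (u v w : E2) : cr (u + v) w = cr u w + cr v w := by
  unfold cr simsonCr; simp only [add_ap]; ring
lemma cr_smul_left (r : ℝ) (v w : E2) : cr (r • v) w = r * cr v w := by
  unfold cr simsonCr; simp only [smul_ap]; ring
lemma cr_smul_right (r : ℝ) (v w : E2) : cr v (r • w) = r * cr v w := by
  unfold cr simsonCr; simp only [smul_ap]; ring
lemma cr_self (v : E2) : cr v v = 0 := by unfold cr simsonCr; ring
lemma cr_zero_left (w : E2) : cr 0 w = 0 := by unfold cr simsonCr; simp only [zero_ap]; ring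

lemma inner2 (v w : E2) : ⟪v, w⟫ = v 0 * w 0 + v 1 * w 1 := by
  simp [PiLp.inner_apply, Fin.sum_univ_two, RCLike.inner_apply, mul_comm]

lemma exists_smul_of_cr {v w : E2} (hv : v ≠ 0) (h : cr v w = 0) : ∃ c : ℝ, w = c • v := by
  unfold cr simsonCr at h
  have hv' : v 0 ≠ 0 ∨ v 1 ≠ 0 := by
    by_contra hc; push_neg at hc; exact hv (E2_zero hc.1 hc.2)
  rcases hv' with h0 | h1
  · refine ⟨w 0 / v 0, E2_ext ?_ ?_⟩
    · show w 0 = w 0 / v 0 * v 0; field_simp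
    · show w 1 = w 0 / v 0 * v 1; field_simp; nlinarith [h]
  · refine ⟨w 1 / v 1, E2_ext ?_ ?_⟩
    · show w 0 = w 1 / v 1 * v 0; field_simp; nlinarith [h]
    · show w 1 = w 1 / v 1 * v 1; field_simp

lemma exists_smul_ne_of_cr {v w : E2} (hv : v ≠ 0) (hw : w ≠ 0) (h : cr v w = 0) :
    ∃ c : ℝ, c ≠ 0 ∧ w = c • v := by
  obtain ⟨c, hc⟩ := exists_smul_of_cr hv h
  exact ⟨c, fun h0 => hw (by simp [hc, h0]), hc⟩

lemma zero_of_inner2 {w d e : E2} (h1 : ⟪w, d⟫ = 0) (h2 : ⟪w, e⟫ = 0) (hc : cr d e ≠ 0) :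
    w = 0 := by
  rw [inner2] at h1 h2
  unfold cr simsonCr at hc
  apply E2_zero
  · have h3 : w 0 * (d 0 * e 1 - d 1 * e 0) = 0 := by linear_combination e 1 * h1 - d 1 * h2
    rcases mul_eq_zero.1 h3 with h | h
    · exact h
    · exact absurd h hc
  · have h3 : w 1 * (d 0 * e 1 - d 1 * e 0) = 0 := by linear_combination - e 0 * h1 + d 0 * h2
    rcases mul_eq_zero.1 h3 with h | h
    · exact h
    · exact absurd h hc

lemma memL_iff {a b x : E2} : x ∈ affineSpan ℝ ({a, b} : Set E2) ↔
    ∃ r : ℝ, x - a = r • (b - a) := by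
  constructor
  · intro hx
    have h := AffineSubspace.vsub_mem_direction hx (left_mem_affineSpan_pair ℝ a b)
    rw [direction_affineSpan, vectorSpan_pair] at h
    obtain ⟨r, hr⟩ := Submodule.mem_span_singleton.1 h
    have hr' : r • (a - b) = x - a := hr
    exact ⟨-r, by rw [← hr']; module⟩
  · rintro ⟨r, hr⟩
    have hx : x = r • (b -ᵥ a) +ᵥ a := by
      rw [vsub_eq_sub, vadd_eq_add, ← hr]; abel
    rw [hx]; exact smul_vsub_vadd_mem_affineSpan_pair r a b

lemma mem_of_cr {a b d : E2} (hd : d ≠ 0) (hba : b - a ≠ 0) (hdir : cr d (b - a) = 0)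
    {x : E2} (hx : cr (x - a) d = 0) : x ∈ affineSpan ℝ ({a, b} : Set E2) := by
  obtain ⟨c, hc⟩ := exists_smul_of_cr hd hdir
  have hc0 : c ≠ 0 := fun h0 => hba (by simp [hc, h0])
  have hx' : cr d (x - a) = 0 := by rw [cr_swap]; linarith [hx]
  obtain ⟨t, ht⟩ := exists_smul_of_cr hd hx'
  refine memL_iff.2 ⟨t / c, ?_⟩
  rw [ht, hc, smul_smul]; congr 1; field_simp

lemma sside_sign {a b d : E2} (hd : d ≠ 0) (hba : b - a ≠ 0) (hdir : cr d (b - a) = 0)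
    {x y : E2} (h : (affineSpan ℝ ({a, b} : Set E2)).SSameSide x y) :
    (cr x d - cr a d) * (cr y d - cr a d) > 0 := by
  obtain ⟨⟨p₁, hp₁, p₂, hp₂, hray⟩, hx, hy⟩ := h
  have hdir' : cr (b - a) d = 0 := by rw [cr_swap, hdir]; ring
  have gline : ∀ p ∈ affineSpan ℝ ({a, b} : Set E2), cr p d = cr a d := by
    intro p hp
    obtain ⟨r, hr⟩ := memL_iff.1 hp
    have h2 : cr (p - a) d = 0 := by rw [hr, cr_smul_left, hdir']; ring
    rw [cr_sub_left] at h2; linarith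
  have gp₁ := gline _ hp₁
  have gp₂ := gline _ hp₂
  have hgx : cr (x - p₁) d ≠ 0 := by
    intro h0
    apply hx
    apply mem_of_cr hd hba hdir
    have h1 : cr (p₁ - a) d = 0 := by rw [cr_sub_left, gp₁]; ring
    have e : x - a = (x - p₁) + (p₁ - a) := by abel
    rw [e, cr_add_left, h0, h1]; ring
  have hgy : cr (y - p₂) d ≠ 0 := by
    intro h0
    apply hy
    apply mem_of_cr hd hba hdir
    have h1 : cr (p₂ - a) d = 0 := by rw [cr_sub_left, gp₂]; ring
    have e : y - a = (y - p₂) + (p₂ - a) := by abel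
    rw [e, cr_add_left, h0, h1]; ring
  have hw₁ : x -ᵥ p₁ ≠ 0 := by
    rw [vsub_eq_sub]; intro h0; rw [h0, cr_zero_left] at hgx; exact hgx rfl
  have hw₂ : y -ᵥ p₂ ≠ 0 := by
    rw [vsub_eq_sub]; intro h0; rw [h0, cr_zero_left] at hgy; exact hgy rfl
  obtain ⟨r₁, r₂, hr₁, hr₂, hre⟩ := hray.exists_pos hw₁ hw₂
  have hre' : r₁ • (x - p₁) = r₂ • (y - p₂) := hre
  have key : r₁ * cr (x - p₁) d = r₂ * cr (y - p₂) d := by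
    rw [← cr_smul_left, ← cr_smul_left, hre']
  have h1 : cr (x - p₁) d = (r₂ / r₁) * cr (y - p₂) d := by
    field_simp; linarith [key]
  have pos : cr (x - p₁) d * cr (y - p₂) d > 0 := by
    rw [h1]
    have hq : (0:ℝ) < r₂ / r₁ := div_pos hr₂ hr₁
    have hs := mul_self_pos.2 hgy
    calc (0:ℝ) < (r₂ / r₁) * (cr (y - p₂) d * cr (y - p₂) d) := by positivity
      _ = r₂ / r₁ * cr (y - p₂) d * cr (y - p₂) d := by ring
  simp only [cr_sub_left, gp₁, gp₂] at pos
  exact pos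

end SimsonAux

open SimsonAux

set_option maxHeartbeats 2000000 in
/-- If `Π = V 0 ... V (n-1)` (extended periodically), `n ≥ 5`, is a convex
nondegenerate Simson polygon — i.e. it admits a point `P` whose orthogonal projections
(feet `F i`) onto all the side lines `Vᵢ Vᵢ₊₁` are collinear — then no two of its side
lines are parallel. -/
theorem stmt_2 (n : ℕ) (hn : 5 ≤ n) (V : ℕ → EuclideanSpace ℝ (Fin 2))
    (hper : ∀ i, V (i + n) = V i)
    -- nondegeneracy: no three vertices are collinear
    (hnd : ∀ i j k, i < j → j < k → k < n →
      ¬ Collinear ℝ ({V i, V j, V k} : Set (EuclideanSpace ℝ (Fin 2))))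
    -- convexity: vertices not on the line of side `i` are strictly on the same side of it
    (hconv : ∀ i j k : ℕ, V j ≠ V i → V j ≠ V (i + 1) → V k ≠ V i → V k ≠ V (i + 1) →
      (affineSpan ℝ ({V i, V (i + 1)} : Set (EuclideanSpace ℝ (Fin 2)))).SSameSide
        (V j) (V k))
    -- `Π` is a Simson polygon, with Simson point `P`:
    (hsimson : ∃ (P : EuclideanSpace ℝ (Fin 2)) (F : ℕ → EuclideanSpace ℝ (Fin 2)),
      (∀ i, F i ∈ affineSpan ℝ ({V i, V (i + 1)} : Set (EuclideanSpace ℝ (Fin 2))) ∧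
        ⟪P - F i, V (i + 1) - V i⟫ = 0) ∧
      Collinear ℝ (Set.range F)) :
    ∀ i j, i < n → j < n → i ≠ j →
      ¬ AffineSubspace.Parallel
        (affineSpan ℝ ({V i, V (i + 1)} : Set (EuclideanSpace ℝ (Fin 2))))
        (affineSpan ℝ ({V j, V (j + 1)} : Set (EuclideanSpace ℝ (Fin 2)))) := by
  intro i j hi hj hij hpar
  have hn0 : 0 < n := by omega
  -- periodicity modulo `n`
  have Vmod : ∀ a : ℕ, V a = V (a % n) := by
    have key : ∀ q r : ℕ, V (r + q * n) = V r := by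
      intro q
      induction q with
      | zero => intro r; simp
      | succ q ih =>
        intro r
        rw [show r + (q + 1) * n = (r + q * n) + n by ring, hper, ih]
    intro a
    conv_lhs => rw [← Nat.mod_add_div' a n]
    exact key _ _
  -- residue arithmetic
  have rne : ∀ a r : ℕ, 0 < r → r < n → (a + r) % n ≠ a % n := by
    intro a r h1 h2 he
    have hd : n ∣ (a + r) - a := (Nat.modEq_iff_dvd' (Nat.le_add_right a r)).mp he.symm
    rw [Nat.add_sub_cancel_left] at hd
    have := Nat.le_of_dvd h1 hd
    omega
  have rne2 : ∀ a r s : ℕ, r < s → s - r < n → (a + r) % n ≠ (a + s) % n := by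
    intro a r s h1 h2 he
    have h3 := rne (a + r) (s - r) (by omega) h2
    rw [show a + r + (s - r) = a + s by omega] at h3
    exact h3 he.symm
  have succ_inj : ∀ a b : ℕ, (a + 1) % n = (b + 1) % n → a % n = b % n := by
    intro a b h
    exact Nat.ModEq.add_right_cancel' 1 h
  have hii1 : ∀ a : ℕ, (a + 1) % n ≠ a % n := fun a => rne a 1 one_pos (by omega)
  -- nondegeneracy in terms of residues
  have hnd' : ∀ a b c : ℕ, a % n ≠ b % n → a % n ≠ c % n → b % n ≠ c % n →
      ¬ Collinear ℝ ({V a, V b, V c} : Set E2) := by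
    intro a b c hab hac hbc hcol3
    rw [Vmod a, Vmod b, Vmod c] at hcol3
    have main : ∀ x y z : ℕ, x < y → y < z → z < n →
        ({V x, V y, V z} : Set E2) ⊆ {V (a % n), V (b % n), V (c % n)} → False := by
      intro x y z h1 h2 h3 hsub
      exact hnd x y z h1 h2 h3 (hcol3.subset hsub)
    have hra : a % n < n := Nat.mod_lt _ hn0
    have hrb : b % n < n := Nat.mod_lt _ hn0
    have hrc : c % n < n := Nat.mod_lt _ hn0
    rcases Nat.lt_trichotomy (a % n) (b % n) with h1 | h1 | h1
    · rcases Nat.lt_trichotomy (b % n) (c % n) with h2 | h2 | h2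
      · exact main _ _ _ h1 h2 hrc (by intro t ht; simp only [Set.mem_insert_iff,
          Set.mem_singleton_iff] at ht ⊢; tauto)
      · exact absurd h2 hbc
      · rcases Nat.lt_trichotomy (a % n) (c % n) with h3 | h3 | h3
        · exact main _ _ _ h3 h2 hrb (by intro t ht; simp only [Set.mem_insert_iff,
            Set.mem_singleton_iff] at ht ⊢; tauto)
        · exact absurd h3 hac
        · exact main _ _ _ h3 h1 hrb (by intro t ht; simp only [Set.mem_insert_iff,
            Set.mem_singleton_iff] at ht ⊢; tauto)
    · exact absurd h1 hab
    · rcases Nat.lt_trichotomy (a % n) (c % n) with h2 | h2 | h2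
      · exact main _ _ _ h1 h2 hrc (by intro t ht; simp only [Set.mem_insert_iff,
          Set.mem_singleton_iff] at ht ⊢; tauto)
      · exact absurd h2 hac
      · rcases Nat.lt_trichotomy (b % n) (c % n) with h3 | h3 | h3
        · exact main _ _ _ h3 h2 hra (by intro t ht; simp only [Set.mem_insert_iff,
            Set.mem_singleton_iff] at ht ⊢; tauto)
        · exact absurd h3 hbc
        · exact main _ _ _ h3 h1 hra (by intro t ht; simp only [Set.mem_insert_iff,
            Set.mem_singleton_iff] at ht ⊢; tauto)
  -- distinctness of vertices with distinct residues
  have Vne : ∀ a b : ℕ, a % n ≠ b % n → V a ≠ V b := by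
    intro a b hab he
    have hex : ∃ c, c < 3 ∧ c ≠ a % n ∧ c ≠ b % n := by
      by_cases h1 : 0 = a % n
      · by_cases h2 : 1 = b % n
        · exact ⟨2, by omega, by omega, by omega⟩
        · by_cases h3 : 1 = a % n
          · exact ⟨2, by omega, by omega, by omega⟩
          · by_cases h4 : 0 = b % n
            · exact ⟨1, by omega, by omega, by omega⟩
            · exact ⟨1, by omega, by omega, by omega⟩
      · by_cases h2 : 0 = b % n
        · by_cases h3 : 1 = a % n
          · exact ⟨2, by omega, by omega, by omega⟩
          · exact ⟨1, by omega, by omega, by omega⟩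
        · exact ⟨0, by omega, by omega, by omega⟩
    obtain ⟨c, hc3, hca, hcb⟩ := hex
    have hcm : c % n = c := Nat.mod_eq_of_lt (by omega)
    apply hnd' a b c hab (by rw [hcm]; exact fun h => hca h.symm)
      (by rw [hcm]; exact fun h => hcb h.symm)
    rw [he]
    have hset : ({V b, V b, V c} : Set E2) = {V b, V c} := by simp
    rw [hset]
    exact collinear_pair ℝ _ _
  have hdvne : ∀ a : ℕ, V (a + 1) - V a ≠ 0 := by
    intro a h0
    exact Vne (a + 1) a (hii1 a) (by rwa [sub_eq_zero] at h0)
  have hdne : V (i + 1) - V i ≠ 0 := hdvne i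
  -- the two parallel sides have cross-product zero
  have hdirs := hpar.direction_eq
  rw [direction_affineSpan, direction_affineSpan, vectorSpan_pair, vectorSpan_pair] at hdirs
  have hmemd : V j -ᵥ V (j + 1) ∈ Submodule.span ℝ {V i -ᵥ V (i + 1)} := by
    rw [hdirs]; exact Submodule.mem_span_singleton_self _
  obtain ⟨c0, hc0⟩ := Submodule.mem_span_singleton.1 hmemd
  have hcij : cr (V (i + 1) - V i) (V (j + 1) - V j) = 0 := by
    have hc0' : c0 • (V i - V (i + 1)) = V j - V (j + 1) := hc0
    have he : V (j + 1) - V j = c0 • (V (i + 1) - V i) := by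
      rw [show c0 • (V (i+1) - V i) = -(c0 • (V i - V (i+1))) by module, hc0']; abel
    rw [he, cr_smul_right, cr_self]; ring
  -- parallel distinct side lines are disjoint
  have disj : ∀ a b : ℕ, a % n ≠ b % n → cr (V (a + 1) - V a) (V (b + 1) - V b) = 0 →
      ∀ x : E2, x ∈ affineSpan ℝ ({V a, V (a + 1)} : Set E2) →
        x ∈ affineSpan ℝ ({V b, V (b + 1)} : Set E2) → False := by
    intro a b hab hcr x hxa hxb
    obtain ⟨c, hcne, hc⟩ := exists_smul_ne_of_cr (hdvne a) (hdvne b) hcr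
    have hdir : (affineSpan ℝ ({V a, V (a + 1)} : Set E2)).direction =
        (affineSpan ℝ ({V b, V (b + 1)} : Set E2)).direction := by
      rw [direction_affineSpan, direction_affineSpan, vectorSpan_pair, vectorSpan_pair]
      have e1 : (V b -ᵥ V (b + 1)) = c • (V a -ᵥ V (a + 1)) := by
        show V b - V (b + 1) = c • (V a - V (a + 1))
        have : V (b + 1) - V b = c • (V (a + 1) - V a) := hc
        rw [show c • (V a - V (a+1)) = -(c • (V (a+1) - V a)) by module, ← this]; abel
      rw [e1, Submodule.span_singleton_smul_eq (IsUnit.mk0 c hcne)]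
    have hLeq : affineSpan ℝ ({V a, V (a + 1)} : Set E2) =
        affineSpan ℝ ({V b, V (b + 1)} : Set E2) :=
      (AffineSubspace.eq_iff_direction_eq_of_mem hxa hxb).2 hdir
    by_cases hb1 : b % n = (a + 1) % n
    · have hw : V (b + 1) ∈ affineSpan ℝ ({V a, V (a + 1)} : Set E2) := by
        rw [hLeq]; exact right_mem_affineSpan_pair ℝ _ _
      have hcol3 := collinear_insert_of_mem_affineSpan_pair hw
      have eb : (b + 1) % n = (a + 2) % n := by
        conv_lhs => rw [Nat.add_mod, hb1, ← Nat.add_mod]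
      apply hnd' (b + 1) a (a + 1) ?_ ?_ ((hii1 a).symm) hcol3
      · rw [eb]; exact rne a 2 (by omega) (by omega)
      · rw [eb]
        have h3 := rne (a + 1) 1 one_pos (by omega)
        rwa [show a + 1 + 1 = a + 2 by omega] at h3
    · have hw : V b ∈ affineSpan ℝ ({V a, V (a + 1)} : Set E2) := by
        rw [hLeq]; exact left_mem_affineSpan_pair ℝ _ _
      have hcol3 := collinear_insert_of_mem_affineSpan_pair hw
      exact hnd' b a (a + 1) hab.symm hb1 ((hii1 a).symm) hcol3
  -- Simson point data
  obtain ⟨P, F, hF, hcolF⟩ := hsimson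
  have hij' : i % n ≠ j % n := by
    rw [Nat.mod_eq_of_lt hi, Nat.mod_eq_of_lt hj]; exact hij
  have hFij_ne : F i ≠ F j := by
    intro he
    exact disj i j hij' hcij (F i) (hF i).1 (by rw [he]; exact (hF j).1)
  have hFj_perp : ⟪P - F j, V (i + 1) - V i⟫ = 0 := by
    have h := (hF j).2
    obtain ⟨c, hcne, hc⟩ := exists_smul_ne_of_cr hdne (hdvne j) hcij
    rw [hc, real_inner_smul_right] at h
    rcases mul_eq_zero.1 h with h | h
    · exact absurd h hcne
    · exact h
  -- every foot is orthogonal to the common direction `d`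
  have hperp : ∀ k : ℕ, ⟪P - F k, V (i + 1) - V i⟫ = 0 := by
    obtain ⟨p0, v, hv⟩ := (collinear_iff_exists_forall_eq_smul_vadd _).1 hcolF
    obtain ⟨ri, hri⟩ := hv (F i) (Set.mem_range_self i)
    obtain ⟨rj, hrj⟩ := hv (F j) (Set.mem_range_self j)
    have hri' : F i = ri • v + p0 := hri
    have hrj' : F j = rj • v + p0 := hrj
    have hvd : ⟪v, V (i + 1) - V i⟫ = 0 := by
      have hFiFj : F j - F i = (rj - ri) • v := by rw [hri', hrj']; module
      have hsub : ⟪F j - F i, V (i + 1) - V i⟫ = 0 := by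
        have e : P - F j = (P - F i) - (F j - F i) := by abel
        have h2 := hFj_perp
        rw [e, inner_sub_left, (hF i).2] at h2
        linarith [h2]
      rw [hFiFj, real_inner_smul_left] at hsub
      rcases mul_eq_zero.1 hsub with h | h
      · exfalso
        apply hFij_ne
        rw [hri', hrj', show rj = ri by linarith [h]]
      · exact h
    intro k
    obtain ⟨rk, hrk⟩ := hv (F k) (Set.mem_range_self k)
    have hrk' : F k = rk • v + p0 := hrk
    have hFiFk : F k - F i = (rk - ri) • v := by rw [hri', hrk']; module
    have e : P - F k = (P - F i) - (F k - F i) := by abel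
    rw [e, inner_sub_left, (hF i).2, hFiFk, real_inner_smul_left, hvd]; ring
  -- any side not parallel to `d` passes through `P`
  have hPmem : ∀ k : ℕ, cr (V (i + 1) - V i) (V (k + 1) - V k) ≠ 0 →
      P ∈ affineSpan ℝ ({V k, V (k + 1)} : Set E2) := by
    intro k hk
    have h0 : P - F k = 0 := zero_of_inner2 (hperp k) (hF k).2 hk
    have : P = F k := by rwa [sub_eq_zero] at h0
    rw [this]; exact (hF k).1
  -- only the sides `i` and `j` (mod `n`) can be parallel to `d`
  have honly : ∀ k : ℕ, k % n ≠ i % n → k % n ≠ j % n →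
      cr (V (i + 1) - V i) (V (k + 1) - V k) ≠ 0 := by
    intro k hki hkj hck
    have hcjk : cr (V (j + 1) - V j) (V (k + 1) - V k) = 0 := by
      obtain ⟨cj, hcjne, hcj⟩ := exists_smul_ne_of_cr hdne (hdvne j) hcij
      obtain ⟨ck, hck2⟩ := exists_smul_of_cr hdne hck
      rw [hcj, hck2, cr_smul_left, cr_smul_right, cr_self]; ring
    have hm1 : ∀ a : ℕ, V a ∈ affineSpan ℝ ({V a, V (a + 1)} : Set E2) :=
      fun a => left_mem_affineSpan_pair ℝ _ _
    have hm2 : ∀ a : ℕ, V (a + 1) ∈ affineSpan ℝ ({V a, V (a + 1)} : Set E2) :=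
      fun a => right_mem_affineSpan_pair ℝ _ _
    -- distinctness of vertices across the three pairwise parallel sides
    have dne : ∀ a b : ℕ, a % n ≠ b % n → cr (V (a + 1) - V a) (V (b + 1) - V b) = 0 →
        ∀ x y : E2, x ∈ affineSpan ℝ ({V a, V (a + 1)} : Set E2) →
          y ∈ affineSpan ℝ ({V b, V (b + 1)} : Set E2) → x ≠ y := by
      intro a b hab hcr x y hx hy he
      exact disj a b hab hcr x hx (by rw [he]; exact hy)
    have hcji : cr (V (j + 1) - V j) (V (i + 1) - V i) = 0 := by rw [cr_swap, hcij]; ring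
    have hcki : cr (V (k + 1) - V k) (V (i + 1) - V i) = 0 := by rw [cr_swap, hck]; ring
    have hckj : cr (V (k + 1) - V k) (V (j + 1) - V j) = 0 := by rw [cr_swap, hcjk]; ring
    have s1 := hconv j i k
      (dne i j hij' hcij _ _ (hm1 i) (hm1 j))
      (dne i j hij' hcij _ _ (hm1 i) (hm2 j))
      (dne k j hkj hckj _ _ (hm1 k) (hm1 j))
      (dne k j hkj hckj _ _ (hm1 k) (hm2 j))
    have s2 := hconv i j k
      (dne j i hij'.symm hcji _ _ (hm1 j) (hm1 i))
      (dne j i hij'.symm hcji _ _ (hm1 j) (hm2 i))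
      (dne k i hki hcki _ _ (hm1 k) (hm1 i))
      (dne k i hki hcki _ _ (hm1 k) (hm2 i))
    have s3 := hconv k i j
      (dne i k hki.symm hck _ _ (hm1 i) (hm1 k))
      (dne i k hki.symm hck _ _ (hm1 i) (hm2 k))
      (dne j k hkj.symm hcjk _ _ (hm1 j) (hm1 k))
      (dne j k hkj.symm hcjk _ _ (hm1 j) (hm2 k))
    have t1 := sside_sign hdne (hdvne j) hcij s1
    have t2 := sside_sign hdne (hdvne i) (by rw [cr_self]) s2
    have t3 := sside_sign hdne (hdvne k) hck s3
    nlinarith [mul_pos (mul_pos t1 t2) t3,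
      sq_nonneg ((cr (V i) (V (i + 1) - V i) - cr (V j) (V (i + 1) - V i)) *
        (cr (V j) (V (i + 1) - V i) - cr (V k) (V (i + 1) - V i)) *
        (cr (V k) (V (i + 1) - V i) - cr (V i) (V (i + 1) - V i)))]
  -- final combinatorial contradiction
  have final : ∀ k l : ℕ, k % n ≠ i % n → k % n ≠ j % n → (k + 1) % n ≠ i % n →
      (k + 1) % n ≠ j % n → l % n ≠ i % n → l % n ≠ j % n → l % n ≠ k % n →
      l % n ≠ (k + 1) % n → False := by
    intro k l hk1 hk2 hk3 hk4 hl1 hl2 hl3 hl4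
    have hPk := hPmem k (honly k hk1 hk2)
    have hPk1 := hPmem (k + 1) (honly (k + 1) hk3 hk4)
    have hPl := hPmem l (honly l hl1 hl2)
    by_cases hPv : P = V (k + 1)
    · rw [hPv] at hPl
      refine hnd' (k + 1) l (l + 1) hl4.symm ?_ ((hii1 l).symm)
        (collinear_insert_of_mem_affineSpan_pair hPl)
      exact fun he => hl3 (succ_inj l k he.symm)
    · have c1 := collinear_insert_of_mem_affineSpan_pair hPk
      have c2 := collinear_insert_of_mem_affineSpan_pair hPk1
      have m1 : V k ∈ affineSpan ℝ ({P, V (k + 1)} : Set E2) :=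
        c1.mem_affineSpan_of_mem_of_ne (by simp) (by simp) (by simp) hPv
      have m2 : V (k + 1 + 1) ∈ affineSpan ℝ ({P, V (k + 1)} : Set E2) :=
        c2.mem_affineSpan_of_mem_of_ne (by simp) (by simp) (by simp) hPv
      have hc4 : Collinear ℝ ({V k, V (k + 1 + 1), P, V (k + 1)} : Set E2) :=
        collinear_insert_insert_of_mem_affineSpan_pair m1 m2
      refine hnd' k (k + 1) (k + 1 + 1) ((hii1 k).symm) ?_ ((hii1 (k + 1)).symm)
        (hc4.subset ?_)
      · rw [show k + 1 + 1 = k + 2 by omega]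
        exact (rne k 2 (by omega) (by omega)).symm
      · intro t ht
        simp only [Set.mem_insert_iff, Set.mem_singleton_iff] at ht ⊢
        tauto
  have him : i % n = i := Nat.mod_eq_of_lt hi
  have hjm : j % n = j := Nat.mod_eq_of_lt hj
  by_cases hj1 : j = (i + 1) % n
  · -- k = i+2, l = i+4
    apply final (i + 2) (i + 4)
    · exact rne i 2 (by omega) (by omega)
    · rw [hjm, hj1]; exact (rne2 i 1 2 (by omega) (by omega)).symm
    · rw [show i + 2 + 1 = i + 3 by omega]; exact rne i 3 (by omega) (by omega)
    · rw [hjm, hj1, show i + 2 + 1 = i + 3 by omega]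
      exact (rne2 i 1 3 (by omega) (by omega)).symm
    · exact rne i 4 (by omega) (by omega)
    · rw [hjm, hj1]; exact (rne2 i 1 4 (by omega) (by omega)).symm
    · exact (rne2 i 2 4 (by omega) (by omega)).symm
    · rw [show i + 2 + 1 = i + 3 by omega]; exact (rne2 i 3 4 (by omega) (by omega)).symm
  · by_cases hj2 : j = (i + 2) % n
    · -- k = i+3, l = i+1
      apply final (i + 3) (i + 1)
      · exact rne i 3 (by omega) (by omega)
      · rw [hjm, hj2]; exact (rne2 i 2 3 (by omega) (by omega)).symm
      · rw [show i + 3 + 1 = i + 4 by omega]; exact rne i 4 (by omega) (by omega)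
      · rw [hjm, hj2, show i + 3 + 1 = i + 4 by omega]
        exact (rne2 i 2 4 (by omega) (by omega)).symm
      · exact rne i 1 (by omega) (by omega)
      · rw [hjm, hj2]; exact rne2 i 1 2 (by omega) (by omega)
      · exact rne2 i 1 3 (by omega) (by omega)
      · rw [show i + 3 + 1 = i + 4 by omega]; exact rne2 i 1 4 (by omega) (by omega)
    · -- k = i+1
      by_cases hj3 : j = (i + 3) % n
      · -- l = i+4
        apply final (i + 1) (i + 4)
        · exact rne i 1 (by omega) (by omega)
        · rw [hjm]; exact fun he => hj1 he.symm
        · rw [show i + 1 + 1 = i + 2 by omega]; exact rne i 2 (by omega) (by omega)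
        · rw [hjm, show i + 1 + 1 = i + 2 by omega]; exact fun he => hj2 he.symm
        · exact rne i 4 (by omega) (by omega)
        · rw [hjm, hj3]; exact (rne2 i 3 4 (by omega) (by omega)).symm
        · exact (rne2 i 1 4 (by omega) (by omega)).symm
        · rw [show i + 1 + 1 = i + 2 by omega]; exact (rne2 i 2 4 (by omega) (by omega)).symm
      · -- l = i+3
        apply final (i + 1) (i + 3)
        · exact rne i 1 (by omega) (by omega)
        · rw [hjm]; exact fun he => hj1 he.symm
        · rw [show i + 1 + 1 = i + 2 by omega]; exact rne i 2 (by omega) (by omega)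
        · rw [hjm, show i + 1 + 1 = i + 2 by omega]; exact fun he => hj2 he.symm
        · exact rne i 3 (by omega) (by omega)
        · rw [hjm]; exact fun he => hj3 he.symm
        · exact (rne2 i 1 3 (by omega) (by omega)).symm
        · rw [show i + 1 + 1 = i + 2 by omega]; exact (rne2 i 2 3 (by omega) (by omega)).symm
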